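/- For every finite simple graph G = (V, E), all natural numbers x, y with y ≤ x, and every element z of a commutative ring, the trivariate chromatic polynomial satisfies P̃(G, x, y, z) = Σ_{W ⊆ V} (x − y)^{|W|} · χ̃(G − W, y, z), where G − W denotes the subgraph of G induced by V \ W (i.e. the graph obtained by deleting the vertices of W together with their incident edges), and (x − y)^{|W|} is interpreted as the natural number (x − y)^{|W|} cast into the ring. -/

import Mathlib

open Finset

/-- The edge set of a simple graph on a finite vertex type, as a `Finset`. -/
noncomputable def edgeFinset' {α : Type*} [Fintype α] (G : SimpleGraph α) :
    Finset (Sym2 α) :=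
  (Set.toFinite G.edgeSet).toFinset

/-- The number of connected components of a graph. -/
noncomputable def ncomp {α : Type*} (G : SimpleGraph α) : ℕ :=
  Nat.card G.ConnectedComponent

/-- The Potts model `Z(G, x, y) = Σ_{A ⊆ E} x^{c(V,A)} y^{|A|}`, where `c(V,A)` is the
number of connected components of the spanning subgraph `(V, A)`. -/
noncomputable def potts {α : Type*} [Fintype α] {R : Type*} [CommRing R]
    (G : SimpleGraph α) (x y : R) : R :=
  ∑ A ∈ (edgeFinset' G).powerset,
    x ^ ncomp (SimpleGraph.fromEdgeSet (A : Set (Sym2 α))) * y ^ A.card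

/-- The subgraph counting polynomial
`H(G, v, x, y) = Σ_{(W,F), W ⊆ V, F ⊆ E(G[W])} v^{|W|} x^{c(W,F)} y^{|F|}`,
where `c(W,F)` is the number of connected components of the graph `(W, F)`. -/
noncomputable def scp {α : Type*} [Fintype α] {R : Type*} [CommRing R]
    (G : SimpleGraph α) (v x y : R) : R :=
  ∑ W : Finset α, ∑ F ∈ (edgeFinset' (G.induce (W : Set α))).powerset,
    v ^ W.card * x ^ ncomp (SimpleGraph.fromEdgeSet (F : Set (Sym2 (W : Set α)))) * y ^ F.card

/-- The subgraph component polynomial `Q(G, v, x) = Σ_{W ⊆ V} v^{|W|} x^{k(G[W])}`. -/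
noncomputable def subgraphCompPoly {α : Type*} [Fintype α] {R : Type*} [CommRing R]
    (G : SimpleGraph α) (v x : R) : R :=
  ∑ W : Finset α, v ^ W.card * x ^ ncomp (G.induce (W : Set α))

/-- The number of bad monochromatic edges of a coloring `φ : α → Fin x` (colors `1, …, x`
identified with `Fin x` via `c ↦ c + 1`): edges all of whose vertices get the same color
`c ≤ y`, i.e. `(c : ℕ) < y`. -/
noncomputable def badCount {α : Type*} {x : ℕ} (G : SimpleGraph α) (y : ℕ)
    (φ : α → Fin x) : ℕ :=
  {e ∈ G.edgeSet | ∃ c : Fin x, (c : ℕ) < y ∧ ∀ w ∈ e, φ w = c}.ncard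

/-- The number of monochromatic edges of a coloring `φ : α → Fin x`. -/
noncomputable def monoCount {α : Type*} {x : ℕ} (G : SimpleGraph α)
    (φ : α → Fin x) : ℕ :=
  {e ∈ G.edgeSet | ∃ c : Fin x, ∀ w ∈ e, φ w = c}.ncard

/-- The bad coloring polynomial `χ̃(G, x, z) = Σ_{φ : V → {1,…,x}} z^{m(φ)}`, where `m(φ)`
is the number of monochromatic edges of `φ`. -/
noncomputable def badChrom {α : Type*} [Fintype α] [DecidableEq α] {R : Type*} [CommRing R]
    (G : SimpleGraph α) (x : ℕ) (z : R) : R :=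
  ∑ φ : α → Fin x, z ^ monoCount G φ

/-- The trivariate chromatic polynomial `P̃(G, x, y, z) = Σ_{φ : V → {1,…,x}} z^{b(φ)}`,
where `b(φ)` is the number of bad monochromatic edges of `φ` (monochromatic in a color
`c ≤ y`). -/
noncomputable def triChrom {α : Type*} [Fintype α] [DecidableEq α] {R : Type*} [CommRing R]
    (G : SimpleGraph α) (x y : ℕ) (z : R) : R :=
  ∑ φ : α → Fin x, z ^ badCount G y φ

/-- The subgraph counting polynomial as a polynomial with integer coefficients in the
variables `v = X 0`, `x = X 1`, `y = X 2`. -/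
noncomputable def scpPoly {α : Type*} [Fintype α] (G : SimpleGraph α) :
    MvPolynomial (Fin 3) ℤ :=
  scp G (MvPolynomial.X 0) (MvPolynomial.X 1) (MvPolynomial.X 2)


section auxLemmas

private lemma badCount_eq_monoCount' {V : Type*} {x y : ℕ} (hxy : y ≤ x) (G : SimpleGraph V)
    (T : Set V) (φ : V → Fin x) (hT : ∀ v, v ∈ T ↔ (φ v : ℕ) < y)
    (g : T → Fin y) (hg : ∀ v : T, (g v : ℕ) = (φ v : ℕ)) :
    badCount G y φ = monoCount (G.induce T) g := by
  have hinj : Function.Injective (Sym2.map (Subtype.val : T → V)) :=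
    Sym2.map.injective Subtype.val_injective
  have hset : {e ∈ G.edgeSet | ∃ c : Fin x, (c : ℕ) < y ∧ ∀ w ∈ e, φ w = c}
      = Sym2.map (Subtype.val : T → V) ''
        {e ∈ (G.induce T).edgeSet | ∃ c : Fin y, ∀ w ∈ e, g w = c} := by
    ext e
    simp only [Set.mem_setOf_eq, Set.mem_image]
    constructor
    · intro he
      obtain ⟨he, c, hc, hmono⟩ := he
      induction e using Sym2.ind with
      | _ a b =>
        have ha : φ a = c := hmono a (by simp)
        have hb : φ b = c := hmono b (by simp)
        have haT : a ∈ T := (hT a).mpr (by rw [ha]; exact hc)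
        have hbT : b ∈ T := (hT b).mpr (by rw [hb]; exact hc)
        refine ⟨s(⟨a, haT⟩, ⟨b, hbT⟩), ⟨?_, ⟨⟨(c : ℕ), hc⟩, ?_⟩⟩, rfl⟩
        · simpa using he
        · intro w hw
          rcases (Sym2.mem_iff).mp hw with rfl | rfl
          · exact Fin.ext (by rw [hg]; rw [ha])
          · exact Fin.ext (by rw [hg]; rw [hb])
    · rintro ⟨e', ⟨he', c, hmono⟩, rfl⟩
      induction e' using Sym2.ind with
      | _ a b =>
        refine ⟨by simpa using he', ⟨(c : ℕ), c.isLt.trans_le hxy⟩, c.isLt, ?_⟩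
        intro w hw
        simp only [Sym2.map_pair_eq, Sym2.mem_iff] at hw
        rcases hw with rfl | rfl
        · exact Fin.ext (by rw [← hg a, hmono a (by simp)])
        · exact Fin.ext (by rw [← hg b, hmono b (by simp)])
  unfold badCount monoCount
  rw [hset, Set.ncard_image_of_injective _ hinj]

private noncomputable def glue {V : Type*} [Fintype V] [DecidableEq V] {x y : ℕ}
    (hxy : y ≤ x) (W : Finset V)
    (p : (((W : Set V)) → Fin (x - y)) × ((((Wᶜ : Finset V) : Set V)) → Fin y)) : V → Fin x :=
  fun v =>
    if h : v ∈ W then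
      ⟨y + (p.1 ⟨v, h⟩ : ℕ), by have := (p.1 ⟨v, h⟩).isLt; omega⟩
    else
      ⟨(p.2 ⟨v, by simpa using h⟩ : ℕ), by have := (p.2 ⟨v, by simpa using h⟩).isLt; omega⟩

private noncomputable def colorEquiv {V : Type*} [Fintype V] [DecidableEq V] {x y : ℕ}
    (hxy : y ≤ x) (W : Finset V) :
    {φ : V → Fin x // (Finset.univ.filter fun v => y ≤ ((φ v : ℕ))) = W} ≃
      ((((W : Set V)) → Fin (x - y)) × ((((Wᶜ : Finset V) : Set V)) → Fin y)) where
  toFun φ :=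
    (fun w => ⟨(φ.1 w : ℕ) - y, by
        have h1 : y ≤ ((φ.1 w : ℕ)) := by
          have h2 := Finset.ext_iff.mp φ.2 (w : V)
          simp only [Finset.mem_filter, Finset.mem_univ, true_and] at h2
          exact h2.mpr w.2
        have := (φ.1 w).isLt
        omega⟩,
     fun v => ⟨(φ.1 v : ℕ), by
        have h1 : ¬ y ≤ ((φ.1 v : ℕ)) := by
          have h2 := Finset.ext_iff.mp φ.2 (v : V)
          simp only [Finset.mem_filter, Finset.mem_univ, true_and] at h2
          have hv : (v : V) ∉ W := by have := v.2; simp at this; exact this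
          exact fun hle => hv (h2.mp hle)
        have := (φ.1 v).isLt
        omega⟩)
  invFun p := ⟨glue hxy W p, by
    ext v
    simp only [Finset.mem_filter, Finset.mem_univ, true_and]
    simp only [glue]
    rcases Decidable.em (v ∈ W) with h | h
    · simp only [dif_pos h, h, iff_true]
      exact Nat.le_add_right _ _
    · rw [dif_neg h]
      have := (p.2 ⟨v, by simpa using h⟩).isLt
      simp only [h, iff_false]
      omega⟩
  left_inv φ := by
    apply Subtype.ext
    funext v
    have h2 := Finset.ext_iff.mp φ.2 v
    simp only [Finset.mem_filter, Finset.mem_univ, true_and] at h2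
    apply Fin.ext
    simp only [glue]
    rcases Decidable.em (v ∈ W) with h | h
    · simp only [dif_pos h]
      have := h2.mpr h
      omega
    · simp only [dif_neg h]
  right_inv p := by
    refine Prod.ext ?_ ?_
    · funext w
      apply Fin.ext
      have hw : (w : V) ∈ W := w.2
      simp only [glue, dif_pos hw, Subtype.coe_eta]
      omega
    · funext v
      apply Fin.ext
      have hv : (v : V) ∉ W := by have := v.2; simp at this; exact this
      simp only [glue, dif_neg hv, Subtype.coe_eta]

end auxLemmas

/-- `P̃(G, x, y, z) = Σ_{W ⊆ V} (x − y)^{|W|} · χ̃(G − W, y, z)`, where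
`G − W` is the subgraph induced by `V \\ W`. -/
theorem triChrom_eq_sum_badChrom {V : Type*} [Fintype V] [DecidableEq V] {R : Type*}
    [CommRing R] (G : SimpleGraph V) (x y : ℕ) (hxy : y ≤ x) (z : R) :
    triChrom G x y z
      = ∑ W : Finset V,
          (((x - y) ^ W.card : ℕ) : R) * badChrom (G.induce ((Wᶜ : Finset V) : Set V)) y z := by
  classical
  rw [triChrom, ← Finset.sum_fiberwise (Finset.univ : Finset (V → Fin x))
      (fun φ => Finset.univ.filter fun v => y ≤ ((φ v : ℕ))) (fun φ => z ^ badCount G y φ)]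
  refine Finset.sum_congr rfl fun W _ => ?_
  rw [Finset.sum_subtype (p := fun φ : V → Fin x =>
      (Finset.univ.filter fun v => y ≤ ((φ v : ℕ))) = W) _ (fun φ => by simp)
      (fun φ => z ^ badCount G y φ)]
  rw [Fintype.sum_equiv (colorEquiv hxy W) _
      (fun p => z ^ monoCount (G.induce ((Wᶜ : Finset V) : Set V)) p.2) ?_]
  · rw [Fintype.sum_prod_type]
    rw [badChrom]
    dsimp only
    rw [Finset.sum_const, Finset.card_univ]
    have hcard : Fintype.card (((W : Set V)) → Fin (x - y)) = (x - y) ^ W.card := by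
      simp [Fintype.card_fun]
    rw [hcard, nsmul_eq_mul, Nat.cast_pow]
  · intro φ
    congr 1
    refine badCount_eq_monoCount' hxy G _ φ.1 ?_ _ ?_
    · intro v
      have h2 := Finset.ext_iff.mp φ.2 v
      simp only [Finset.mem_filter, Finset.mem_univ, true_and] at h2
      rw [show (v ∈ ((Wᶜ : Finset V) : Set V)) ↔ v ∉ W by simp, ← h2]
      omega
    · intro v; rfl
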